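/- arXiv:math/0701498 — 6 statements merged into one kernel-verified Lean document; each statement's English description precedes it below -/
import Mathlib

section
/- Let p be a prime, let G be a group with subgroups A and B, let φ : A → B be an isomorphism, and let G* = (G, t; t⁻¹At = B, φ) be the corresponding HNN-extension. If G* is residually a finite p-group then the family 𝓕_G^p(A,B,φ) of all (A,B,φ,p)-compatible subgroups of G is a filtration, i.e. the intersection of all its members is the identity subgroup. -/
/-- A group `X` is *residually a finite p-group* if every non-identity element is excluded
by some normal subgroup of `p`-power index (equivalently, survives in some finite `p`-group
quotient). -/
def ResiduallyPGroup (p : ℕ) (X : Type*) [Group X] : Prop :=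
  ∀ x : X, x ≠ 1 → ∃ N : Subgroup X, N.Normal ∧ x ∉ N ∧ ∃ k : ℕ, N.index = p ^ k

/-- A subgroup `H` of `G` is `(A,B,φ)`-compatible if `φ(A ∩ H) = B ∩ H`. -/
def Compatible {G : Type*} [Group G] {A B : Subgroup G} (φ : A ≃* B) (H : Subgroup G) : Prop :=
  (H.subgroupOf A).map φ.toMonoidHom = H.subgroupOf B

/-- A subgroup `H` of `G` is `(A,B,φ,p)`-compatible if there is a chain
`H = G₀ ≤ G₁ ≤ ⋯ ≤ Gₙ = G` of normal `(A,B,φ)`-compatible subgroups of `G` in which every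
quotient `Gᵢ₊₁/Gᵢ` has order `p` and `φ(a) ≡ a (mod Gᵢ)` for every `a ∈ A ∩ Gᵢ₊₁`. -/
def PCompatible (p : ℕ) {G : Type*} [Group G] {A B : Subgroup G} (φ : A ≃* B)
    (H : Subgroup G) : Prop :=
  ∃ (n : ℕ) (Gs : Fin (n + 1) → Subgroup G),
    Gs 0 = H ∧ Gs (Fin.last n) = ⊤ ∧ Monotone Gs ∧
    (∀ i, (Gs i).Normal ∧ Compatible φ (Gs i)) ∧
    (∀ i : Fin n, (Gs i.castSucc).relIndex (Gs i.succ) = p ∧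
      ∀ a : A, (a : G) ∈ Gs i.succ → (φ a : G) * (a : G)⁻¹ ∈ Gs i.castSucc)


private lemma exists_central_chain (p : ℕ) (hp : p.Prime) {X : Type*} [Group X] :
    ∀ (k : ℕ) (N : Subgroup X), N.Normal → N.index = p ^ k →
    ∃ Ns : ℕ → Subgroup X, Ns 0 = N ∧ Ns k = ⊤ ∧ Monotone Ns ∧ (∀ i, (Ns i).Normal) ∧
      ∀ i < k, (Ns i).relIndex (Ns (i + 1)) = p ∧
        ∀ g x : X, x ∈ Ns (i + 1) → g * x * g⁻¹ * x⁻¹ ∈ Ns i := by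
  intro k
  induction k with
  | zero =>
    intro N hN hNi
    have hNtop : N = ⊤ := Subgroup.index_eq_one.mp (by simpa using hNi)
    exact ⟨fun _ => ⊤, hNtop.symm, rfl, monotone_const, fun _ => inferInstance,
      fun i hi => absurd hi (Nat.not_lt_zero i)⟩
  | succ k ih =>
    intro N hN hNi
    haveI : Fact p.Prime := ⟨hp⟩
    have hQcard : Nat.card (X ⧸ N) = p ^ (k + 1) := by
      rw [← Subgroup.index_eq_card]; exact hNi
    have hfin : Finite (X ⧸ N) := Nat.finite_of_card_ne_zero (by
      rw [hQcard]; exact pow_ne_zero _ hp.pos.ne')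
    have hQnt : Nontrivial (X ⧸ N) := by
      rw [← Finite.one_lt_card_iff_nontrivial, hQcard]
      exact one_lt_pow₀ hp.one_lt (by omega)
    have hPQ : IsPGroup p (X ⧸ N) := IsPGroup.of_card hQcard
    have hcnt : Nontrivial (Subgroup.center (X ⧸ N)) := hPQ.center_nontrivial
    -- Cauchy on the center
    have hpc : IsPGroup p (Subgroup.center (X ⧸ N)) := hPQ.to_subgroup _
    obtain ⟨m, hm⟩ := IsPGroup.iff_card.mp hpc
    have hmne : m ≠ 0 := by
      rintro rfl
      rw [pow_zero] at hm
      exact (Finite.one_lt_card_iff_nontrivial).mpr hcnt |>.ne' hm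
    have hpdvd : p ∣ Nat.card (Subgroup.center (X ⧸ N)) := by
      rw [hm]; exact dvd_pow_self p hmne
    obtain ⟨z, hz⟩ := exists_prime_orderOf_dvd_card' p hpdvd
    set Z : Subgroup (X ⧸ N) := Subgroup.zpowers (z : X ⧸ N) with hZ
    have hzc : (z : X ⧸ N) ∈ Subgroup.center (X ⧸ N) := z.2
    have hZle : Z ≤ Subgroup.center (X ⧸ N) := Subgroup.zpowers_le.mpr hzc
    have hZcard : Nat.card Z = p := by
      rw [hZ, Nat.card_zpowers, Subgroup.orderOf_coe, hz]
    have hZnorm : Z.Normal := by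
      constructor
      intro n hn g
      have : g * n * g⁻¹ = n := by
        have := (Subgroup.mem_center_iff.mp (hZle hn) g)
        rw [this]; group
      rwa [this]
    set N₁ : Subgroup X := Z.comap (QuotientGroup.mk' N) with hN₁
    have hNle : N ≤ N₁ := by
      intro x hx
      simp only [hN₁, Subgroup.mem_comap]
      have : QuotientGroup.mk' N x = 1 := (QuotientGroup.eq_one_iff x).mpr hx
      rw [this]; exact Z.one_mem
    have hN₁norm : N₁.Normal := hZnorm.comap _
    have hZindex : Z.index = p ^ k := by
      have h1 := Z.card_mul_index
      rw [hZcard, hQcard] at h1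
      have : p * Z.index = p * p ^ k := by rw [h1, pow_succ']
      exact Nat.eq_of_mul_eq_mul_left hp.pos this
    have hN₁i : N₁.index = p ^ k := by
      exact (Z.index_comap_of_surjective (QuotientGroup.mk'_surjective N)).trans hZindex
    have hrel : N.relIndex N₁ = p := by
      have h1 := Subgroup.relIndex_mul_index hNle
      rw [hN₁i, hNi] at h1
      have : N.relIndex N₁ * p ^ k = p * p ^ k := by rw [h1, pow_succ']
      exact Nat.eq_of_mul_eq_mul_right (pow_pos hp.pos k) this
    have hcen : ∀ g x : X, x ∈ N₁ → g * x * g⁻¹ * x⁻¹ ∈ N := by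
      intro g x hx
      rw [← QuotientGroup.eq_one_iff]
      have hxc : (x : X ⧸ N) ∈ Subgroup.center (X ⧸ N) := hZle hx
      have h2 := Subgroup.mem_center_iff.mp hxc (g : X ⧸ N)
      show ((g * x * g⁻¹ * x⁻¹ : X) : X ⧸ N) = 1
      simp only [QuotientGroup.mk_mul, QuotientGroup.mk_inv]
      rw [h2]
      group
    obtain ⟨Ns', h0', hk', hmono', hnorm', hstep'⟩ := ih N₁ hN₁norm hN₁i
    refine ⟨fun i => Nat.casesOn i N Ns', rfl, hk', ?_, ?_, ?_⟩
    · apply monotone_nat_of_le_succ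
      intro i
      cases i with
      | zero => simpa [h0'] using hNle
      | succ j => exact hmono' (Nat.le_succ j)
    · intro i; cases i with
      | zero => exact hN
      | succ j => exact hnorm' j
    · intro i hi
      cases i with
      | zero =>
        refine ⟨by simpa [h0'] using hrel, fun g x hx => ?_⟩
        exact hcen g x (by simpa [h0'] using hx)
      | succ j => exact hstep' j (by omega)

private lemma compatible_of_iff {G : Type*} [Group G] {A B : Subgroup G} (φ : A ≃* B)
    {H : Subgroup G} (h : ∀ a : A, ((a : G) ∈ H ↔ ((φ a : G) ∈ H))) : Compatible φ H := by
  ext b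
  simp only [Subgroup.mem_map, Subgroup.mem_subgroupOf, MulEquiv.coe_toMonoidHom]
  constructor
  · rintro ⟨a, ha, rfl⟩
    exact (h a).mp ha
  · intro hb
    refine ⟨φ.symm b, ?_, φ.apply_symm_apply b⟩
    have := (h (φ.symm b))
    rw [φ.apply_symm_apply b] at this
    exact this.mpr hb

private lemma PCompatible.cons {p : ℕ} {G : Type*} [Group G] {A B : Subgroup G} {φ : A ≃* B}
    {H K : Subgroup G} (hK : PCompatible p φ K) (hHK : H ≤ K) (hHn : H.Normal)
    (hHc : Compatible φ H) (hrel : H.relIndex K = p)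
    (hcong : ∀ a : A, (a : G) ∈ K → (φ a : G) * (a : G)⁻¹ ∈ H) : PCompatible p φ H := by
  obtain ⟨n, Gs, h0, hlast, hmono, hnc, hstep⟩ := hK
  refine ⟨n + 1, Fin.cons H Gs, Fin.cons_zero _ _, ?_, ?_, ?_, ?_⟩
  · rw [← Fin.succ_last, Fin.cons_succ]
    exact hlast
  · rw [Fin.monotone_iff_le_succ]
    intro i
    induction i using Fin.cases with
    | zero =>
      simp only [Fin.castSucc_zero, Fin.cons_zero, Fin.cons_succ, h0]
      exact hHK
    | succ j =>
      rw [← Fin.succ_castSucc, Fin.cons_succ, Fin.cons_succ]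
      exact hmono (Fin.castSucc_le_succ j)
  · intro i
    induction i using Fin.cases with
    | zero => exact ⟨hHn, hHc⟩
    | succ j => rw [Fin.cons_succ]; exact hnc j
  · intro i
    induction i using Fin.cases with
    | zero =>
      simp only [Fin.castSucc_zero, Fin.cons_zero, Fin.cons_succ, h0]
      exact ⟨hrel, hcong⟩
    | succ j =>
      rw [← Fin.succ_castSucc, Fin.cons_succ, Fin.cons_succ]
      exact hstep j

private lemma pCompatible_collapse {p : ℕ} {G : Type*} [Group G] {A B : Subgroup G}
    {φ : A ≃* B} :
    ∀ (k : ℕ) (c : ℕ → Subgroup G), Monotone c → c k = ⊤ →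
    (∀ i, (c i).Normal ∧ Compatible φ (c i)) →
    (∀ i, i < k → c i = c (i + 1) ∨
      ((c i).relIndex (c (i + 1)) = p ∧
        ∀ a : A, (a : G) ∈ c (i + 1) → (φ a : G) * (a : G)⁻¹ ∈ c i)) →
    PCompatible p φ (c 0) := by
  intro k
  induction k with
  | zero =>
    intro c _ htop hnc _
    exact ⟨0, fun _ => c 0, rfl, htop, monotone_const, fun _ => hnc 0, fun i => i.elim0⟩
  | succ k ih =>
    intro c hmono htop hnc hstep
    have h1 : PCompatible p φ (c 1) :=
      ih (fun i => c (i + 1)) (fun i j hij => hmono (by omega)) htop (fun i => hnc (i + 1))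
        (fun i hi => hstep (i + 1) (by omega))
    rcases hstep 0 (Nat.succ_pos k) with heq | ⟨hrel, hcong⟩
    · rw [heq]; exact h1
    · exact h1.cons (hmono (Nat.zero_le 1)) (hnc 0).1 (hnc 0).2 hrel hcong

/-- **Theorem 2 (1).** If the HNN-extension `G* = (G, t; t⁻¹At = B, φ)` is residually a
finite `p`-group, then the family `𝓕_G^p(A,B,φ)` of all `(A,B,φ,p)`-compatible subgroups of
`G` is a filtration, i.e. the intersection of all its members is the identity subgroup. -/
theorem pCompatible_family_filtration_of_residually_p
    (p : ℕ) (hp : p.Prime) (G : Type*) [Group G] (A B : Subgroup G) (φ : A ≃* B)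
    (h : ResiduallyPGroup p (HNNExtension G A B φ)) :
    sInf {H : Subgroup G | PCompatible p φ H} = ⊥ := by
  rw [eq_bot_iff]
  intro x hx
  rw [Subgroup.mem_bot]
  by_contra hx1
  have hofx : HNNExtension.of x ≠ (1 : HNNExtension G A B φ) := by
    intro hh
    exact hx1 (HNNExtension.of_injective (φ := φ) (by rw [hh, map_one]))
  obtain ⟨N, hNnorm, hxN, k, hk⟩ := h (HNNExtension.of x) hofx
  obtain ⟨Ns, h0, hktop, hmono, hnorm, hstep⟩ := exists_central_chain p hp k N hNnorm hk
  set c : ℕ → Subgroup G := fun i => (Ns i).comap (HNNExtension.of (φ := φ)) with hc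
  have hcmono : Monotone c := fun i j hij => Subgroup.comap_mono (hmono hij)
  have hctop : c k = ⊤ := by simp [hc, hktop]
  have hcnc : ∀ i, (c i).Normal ∧ Compatible φ (c i) := by
    intro i
    refine ⟨(hnorm i).comap _, compatible_of_iff φ fun a => ?_⟩
    have hconj : HNNExtension.of (φ := φ) (φ a : G) =
        HNNExtension.t * HNNExtension.of (a : G) * HNNExtension.t⁻¹ :=
      HNNExtension.equiv_eq_conj (φ := φ) a
    simp only [hc, Subgroup.mem_comap, hconj]
    constructor
    · intro ha
      exact (hnorm i).conj_mem _ ha _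
    · intro ha
      have := (hnorm i).conj_mem _ ha HNNExtension.t⁻¹
      simpa [mul_assoc] using this
  have hcstep : ∀ i, i < k → c i = c (i + 1) ∨
      ((c i).relIndex (c (i + 1)) = p ∧
        ∀ a : A, (a : G) ∈ c (i + 1) → (φ a : G) * (a : G)⁻¹ ∈ c i) := by
    intro i hi
    obtain ⟨hreli, hcen⟩ := hstep i hi
    -- the relative index of the pulled-back step divides p
    have hdvd : (c i).relIndex (c (i + 1)) ∣ p := by
      simp only [hc]
      rw [Subgroup.relIndex_comap]
      set M : Subgroup (HNNExtension G A B φ) :=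
        Subgroup.map (HNNExtension.of (φ := φ)) ((Ns (i + 1)).comap (HNNExtension.of (φ := φ)))
      have hMle : M ≤ Ns (i + 1) := Subgroup.map_comap_le _ _
      haveI := hnorm i
      have e1 : (Ns i).relIndex M = (Ns i).relIndex (M ⊔ Ns i) :=
        (Subgroup.relIndex_sup_right M (Ns i)).symm
      have e2 : (Ns i).relIndex (M ⊔ Ns i) * (M ⊔ Ns i).relIndex (Ns (i + 1)) =
          (Ns i).relIndex (Ns (i + 1)) :=
        Subgroup.relIndex_mul_relIndex _ _ _ le_sup_right
          (sup_le hMle (hmono (Nat.le_succ i)))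
      rw [e1, ← hreli, ← e2]
      exact Dvd.intro _ rfl
    rcases (Nat.Prime.eq_one_or_self_of_dvd hp _ hdvd) with h1 | hP
    · left
      have hle : c (i + 1) ≤ c i := Subgroup.relIndex_eq_one.mp h1
      exact le_antisymm (hcmono (Nat.le_succ i)) hle
    · right
      refine ⟨hP, fun a ha => ?_⟩
      simp only [hc, Subgroup.mem_comap] at ha ⊢
      have hconj : HNNExtension.of (φ := φ) (φ a : G) =
          HNNExtension.t * HNNExtension.of (a : G) * HNNExtension.t⁻¹ :=
        HNNExtension.equiv_eq_conj (φ := φ) a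
      rw [map_mul, map_inv, hconj]
      exact hcen HNNExtension.t (HNNExtension.of (a : G)) ha
  have hP0 : PCompatible p φ (c 0) := pCompatible_collapse k c hcmono hctop hcnc hcstep
  have hxc0 : x ∈ c 0 := Subgroup.mem_sInf.mp hx (c 0) hP0
  simp only [hc] at hxc0
  simp only [Subgroup.mem_comap, h0] at hxc0
  exact hxN hxc0
end

section
/- Let p be a prime, let G be a group with subgroups A and B, let φ : A → B be an isomorphism, and let G* = (G, t; t⁻¹At = B, φ) be the corresponding HNN-extension. If N is a normal subgroup of G* of finite p-power index and M = G ∩ N, then M is an (A,B,φ,p)-compatible subgroup of G. -/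
/-- The preimage in `G` of any normal subgroup of the HNN-extension is `(A,B,φ)`-compatible. -/
lemma compatible_comap_of_normal {G : Type*} [Group G] {A B : Subgroup G} (φ : A ≃* B)
    (K : Subgroup (HNNExtension G A B φ)) (hK : K.Normal) :
    Compatible φ (K.comap (HNNExtension.of : G →* HNNExtension G A B φ)) := by
  unfold Compatible
  ext b
  rw [Subgroup.mem_map_equiv]
  simp only [Subgroup.mem_subgroupOf, Subgroup.mem_comap, MulEquiv.coe_toMonoidHom]
  have hconj : (HNNExtension.of (φ.symm b : G) : HNNExtension G A B φ)
      = HNNExtension.t⁻¹ * HNNExtension.of (b : G) * HNNExtension.t :=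
    HNNExtension.equiv_symm_eq_conj b
  rw [hconj]
  constructor
  · intro h
    have := hK.conj_mem _ h HNNExtension.t
    simpa [mul_assoc] using this
  · intro h
    have := hK.conj_mem _ h HNNExtension.t⁻¹
    simpa [mul_assoc] using this

/-- **Lemma 2.2 (b).** If `N` is a normal subgroup of the HNN-extension
`G* = (G, t; t⁻¹At = B, φ)` of finite `p`-power index and `M = G ∩ N` (the preimage of `N`
under the canonical embedding `G →* G*`), then `M` is an `(A,B,φ,p)`-compatible subgroup
of `G`. -/
theorem pCompatible_of_comap_normal_p_power_index
    (p : ℕ) (hp : p.Prime) (G : Type*) [Group G] (A B : Subgroup G) (φ : A ≃* B)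
    (N : Subgroup (HNNExtension G A B φ)) (hN : N.Normal)
    (hidx : ∃ k : ℕ, N.index = p ^ k) :
    PCompatible p φ (N.comap (HNNExtension.of : G →* HNNExtension G A B φ)) := by
  haveI : Fact p.Prime := ⟨hp⟩
  obtain ⟨k, hk⟩ := hidx
  induction k generalizing N with
  | zero =>
    have hNtop : N = ⊤ := Subgroup.index_eq_one.mp (by simpa using hk)
    subst hNtop
    refine ⟨0, fun _ => ⊤, by simp, rfl, monotone_const, ?_, fun i => i.elim0⟩
    intro i
    refine ⟨inferInstance, ?_⟩
    unfold Compatible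
    ext b
    simp only [Subgroup.mem_map, Subgroup.mem_subgroupOf, Subgroup.mem_top, iff_true]
    exact ⟨φ.symm b, trivial, by simp⟩
  | succ k ih =>
    set Gstar := HNNExtension G A B φ with hGstar
    set Q := Gstar ⧸ N with hQdef
    set π : Gstar →* Q := QuotientGroup.mk' N with hπ
    have hπsurj : Function.Surjective π := QuotientGroup.mk'_surjective N
    have hcard : Nat.card Q = p ^ (k + 1) := by
      rw [← hk]; rfl
    haveI : Finite Q := Nat.finite_of_card_ne_zero (by
      rw [hcard]; exact pow_ne_zero _ hp.pos.ne')
    have hQp : IsPGroup p Q := IsPGroup.of_card hcard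
    haveI : Nontrivial Q := by
      rw [← Finite.one_lt_card_iff_nontrivial, hcard]
      exact Nat.one_lt_pow (Nat.succ_ne_zero k) hp.one_lt
    haveI hcnt : Nontrivial (Subgroup.center Q) := hQp.center_nontrivial
    -- find a central element of order p
    have hdvdc : p ∣ Nat.card (Subgroup.center Q) := by
      obtain ⟨m, hm⟩ := (IsPGroup.iff_card.mp (hQp.to_subgroup (Subgroup.center Q)))
      have hm0 : m ≠ 0 := by
        rintro rfl
        rw [pow_zero] at hm
        exact (Finite.one_lt_card_iff_nontrivial.mpr hcnt).ne' hm
      rw [hm]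
      exact dvd_pow_self p hm0
    obtain ⟨z₀, hz₀⟩ := exists_prime_orderOf_dvd_card' (G := Subgroup.center Q) p hdvdc
    set z : Q := (z₀ : Q) with hzdef
    have hzc : z ∈ Subgroup.center Q := z₀.2
    have hz : orderOf z = p := by
      rw [← hz₀]
      exact orderOf_injective (Subgroup.center Q).subtype
        (Subgroup.center Q).subtype_injective z₀
    set Z := Subgroup.zpowers z with hZdef
    have hZle : Z ≤ Subgroup.center Q := Subgroup.zpowers_le.mpr hzc
    have hZcard : Nat.card Z = p := by rw [hZdef, Nat.card_zpowers, hz]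
    have hZnormal : Z.Normal := by
      constructor
      intro n hn g
      have hnc : n ∈ Subgroup.center Q := hZle hn
      have := Subgroup.mem_center_iff.mp hnc g
      rw [this, mul_assoc, mul_inv_cancel, mul_one]
      exact hn
    have hZindex : Z.index = p ^ k := by
      have h1 : Z.index * Nat.card Z = Nat.card Q := Z.index_mul_card
      rw [hZcard, hcard, pow_succ] at h1
      exact Nat.eq_of_mul_eq_mul_right hp.pos h1
    set N' := Z.comap π with hN'def
    have hN'normal : N'.Normal := hZnormal.comap π
    have hN'index : N'.index = p ^ k := by
      exact (Z.index_comap_of_surjective hπsurj).trans hZindex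
    have hNN' : N ≤ N' := by
      intro x hx
      show π x ∈ Z
      have : π x = 1 := by
        rw [← MonoidHom.mem_ker, hπ, QuotientGroup.ker_mk']
        exact hx
      rw [this]; exact one_mem Z
    have IH := ih N' hN'normal hN'index
    set of' : G →* Gstar := (HNNExtension.of : G →* HNNExtension G A B φ) with hof
    set M := N.comap of' with hM
    set M' := N'.comap of' with hM'
    have hMM' : M ≤ M' := Subgroup.comap_mono hNN'
    -- relindex divides p
    have hMker : M = MonoidHom.ker (π.comp of') := by
      ext x
      simp only [hM, Subgroup.mem_comap, MonoidHom.mem_ker, MonoidHom.comp_apply, hπ,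
        QuotientGroup.mk'_apply]
      exact (QuotientGroup.eq_one_iff (of' x)).symm
    have hmapZ : M'.map (π.comp of') ≤ Z := by
      rintro _ ⟨x, hx, rfl⟩
      exact hx
    have hreldvd : M.relIndex M' ∣ p := by
      rw [hMker, Subgroup.relIndex_ker]
      calc Nat.card (M'.map (π.comp of')) ∣ Nat.card Z :=
            Subgroup.card_dvd_of_le hmapZ
        _ = p := hZcard
    rcases hp.eq_one_or_self_of_dvd _ hreldvd with h1 | hps
    · -- M = M', reuse the chain for M'
      have : M = M' := le_antisymm hMM' (Subgroup.relIndex_eq_one.mp h1)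
      rw [this]
      exact IH
    · -- prepend M to the chain for M'
      obtain ⟨n, Gs, hGs0, hGslast, hmono, hnc, hstep⟩ := IH
      have hkey : ∀ a : A, (a : G) ∈ M' → (φ a : G) * (a : G)⁻¹ ∈ M := by
        intro a ha
        have hα : π (of' (a : G)) ∈ Subgroup.center Q := hZle ha
        have hrel2 : of' (φ a : G) = HNNExtension.t * of' (a : G) * HNNExtension.t⁻¹ :=
          HNNExtension.equiv_eq_conj a
        have h2 : π (of' (φ a : G)) = π (of' (a : G)) := by
          rw [hrel2, map_mul, map_mul, map_inv]
          have hc := Subgroup.mem_center_iff.mp hα (π HNNExtension.t)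
          rw [hc, mul_assoc, mul_inv_cancel, mul_one]
        show of' ((φ a : G) * (a : G)⁻¹) ∈ N
        rw [← QuotientGroup.ker_mk' N, ← hπ, MonoidHom.mem_ker, map_mul, map_inv, map_mul,
          map_inv, h2, mul_inv_cancel]
      refine ⟨n + 1, Fin.cons M Gs, Fin.cons_zero _ _, ?_, ?_, ?_, ?_⟩
      · rw [← Fin.succ_last, Fin.cons_succ]
        exact hGslast
      · -- monotone
        intro i j hij
        induction i using Fin.cases with
        | zero =>
          induction j using Fin.cases with
          | zero => exact le_refl _
          | succ j =>
            rw [Fin.cons_zero, Fin.cons_succ]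
            exact hMM'.trans (hGs0 ▸ hmono (Fin.zero_le j))
        | succ i =>
          induction j using Fin.cases with
          | zero => exact absurd (Fin.le_zero_iff.mp hij) (Fin.succ_ne_zero i)
          | succ j =>
            rw [Fin.cons_succ, Fin.cons_succ]
            exact hmono (Fin.succ_le_succ_iff.mp hij)
      · -- normal and compatible
        intro i
        induction i using Fin.cases with
        | zero =>
          rw [Fin.cons_zero]
          exact ⟨hN.comap of', compatible_comap_of_normal φ N hN⟩
        | succ i => simpa [Fin.cons_succ] using hnc i
      · -- steps
        intro i
        induction i using Fin.cases with
        | zero =>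
          have e1 : Fin.cons (α := fun _ => Subgroup G) M Gs
              ((0 : Fin (n + 1)).castSucc) = M := by
            simp
          have e2 : Fin.cons (α := fun _ => Subgroup G) M Gs
              ((0 : Fin (n + 1)).succ) = M' := by
            rw [Fin.succ_zero_eq_one, show (1 : Fin (n + 2)) = (0 : Fin (n + 1)).succ from rfl,
              Fin.cons_succ, hGs0]
          rw [e1, e2]
          exact ⟨hps, hkey⟩
        | succ i =>
          have e1 : Fin.cons (α := fun _ => Subgroup G) M Gs (i.succ.castSucc)
              = Gs i.castSucc := by
            rw [← Fin.succ_castSucc, Fin.cons_succ]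
          have e2 : Fin.cons (α := fun _ => Subgroup G) M Gs (i.succ.succ) = Gs i.succ := by
            rw [Fin.cons_succ]
          rw [e1, e2]
          exact hstep i
end

section
/- Let p be a prime, let G be a group with subgroups A and B, and let φ : A → B be an isomorphism. If H and K are (A,B,φ,p)-compatible subgroups of G, then H ∩ K is an (A,B,φ,p)-compatible subgroup of G; consequently the family 𝓕_G^p(A,B,φ) of all (A,B,φ,p)-compatible subgroups of G is closed under intersections of finite collections of subgroups. -/
section Aux

variable {G : Type*} [Group G] {A B : Subgroup G} {p : ℕ}

lemma compatible_top (φ : A ≃* B) : Compatible φ (⊤ : Subgroup G) := by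
  unfold Compatible
  rw [Subgroup.top_subgroupOf, Subgroup.top_subgroupOf, Subgroup.map_top_of_surjective]
  exact φ.surjective

lemma compatible_inf (φ : A ≃* B) {H K : Subgroup G} (hH : Compatible φ H)
    (hK : Compatible φ K) : Compatible φ (H ⊓ K) := by
  unfold Compatible at *
  have h1 : (H ⊓ K).subgroupOf A = H.subgroupOf A ⊓ K.subgroupOf A :=
    Subgroup.comap_inf H K A.subtype
  have h2 : (H ⊓ K).subgroupOf B = H.subgroupOf B ⊓ K.subgroupOf B :=
    Subgroup.comap_inf H K B.subtype
  rw [h1, h2, Subgroup.map_inf _ _ _ φ.injective, hH, hK]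

lemma compatible_mem (φ : A ≃* B) {H : Subgroup G} (hH : Compatible φ H) (a : A)
    (ha : (a : G) ∈ H) : (φ a : G) ∈ H := by
  have h1 : a ∈ H.subgroupOf A := Subgroup.mem_subgroupOf.2 ha
  have h2 : φ a ∈ (H.subgroupOf A).map φ.toMonoidHom := ⟨a, h1, rfl⟩
  rw [hH] at h2
  exact Subgroup.mem_subgroupOf.1 h2

/-- A single step in a `p`-compatibility chain. -/
def PStep (p : ℕ) (φ : A ≃* B) (L M : Subgroup G) : Prop :=
  L.Normal ∧ Compatible φ L ∧ M.Normal ∧ Compatible φ M ∧ L ≤ M ∧ L.relIndex M = p ∧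
    ∀ a : A, (a : G) ∈ M → (φ a : G) * (a : G)⁻¹ ∈ L

lemma pCompatible_top (φ : A ≃* B) : PCompatible p φ (⊤ : Subgroup G) :=
  ⟨0, fun _ => ⊤, rfl, rfl, monotone_const,
    fun _ => ⟨inferInstance, compatible_top φ⟩, fun i => i.elim0⟩

lemma pCompatible_head {φ : A ≃* B} {L M : Subgroup G} (h : PStep p φ L M)
    (hM : PCompatible p φ M) : PCompatible p φ L := by
  obtain ⟨hLn, hLc, hMn, hMc, hLM, hrel, hcong⟩ := h
  obtain ⟨n, Gs, h0, hlast, hmono, hall, hstep⟩ := hM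
  refine ⟨n + 1, Fin.cons L Gs, rfl, ?_, ?_, ?_, ?_⟩
  · rw [← Fin.succ_last, Fin.cons_succ, hlast]
  · rw [Fin.monotone_iff_le_succ]
    intro i
    induction i using Fin.cases with
    | zero => simpa [h0] using hLM
    | succ j =>
        rw [← Fin.succ_castSucc, Fin.cons_succ, Fin.cons_succ]
        exact hmono (Fin.castSucc_le_succ j)
  · intro i
    induction i using Fin.cases with
    | zero => exact ⟨hLn, hLc⟩
    | succ j => rw [Fin.cons_succ]; exact hall j
  · intro i
    induction i using Fin.cases with
    | zero =>
        simp only [Fin.castSucc_zero, Fin.cons_zero, Fin.cons_succ, h0]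
        exact ⟨hrel, hcong⟩
    | succ j =>
        rw [← Fin.succ_castSucc, Fin.cons_succ, Fin.cons_succ]
        exact hstep j

lemma pCompatible_of_rtg {φ : A ≃* B} {H : Subgroup G}
    (h : Relation.ReflTransGen (PStep p φ) H ⊤) : PCompatible p φ H := by
  induction h using Relation.ReflTransGen.head_induction_on with
  | refl => exact pCompatible_top φ
  | head hs _ ih => exact pCompatible_head hs ih

lemma pCompatible_destruct {φ : A ≃* B} {H : Subgroup G} (h : PCompatible p φ H) :
    H.Normal ∧ Compatible φ H ∧ Relation.ReflTransGen (PStep p φ) H ⊤ := by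
  obtain ⟨n, Gs, h0, hlast, hmono, hall, hstep⟩ := h
  have h0' := hall 0
  rw [h0] at h0'
  refine ⟨h0'.1, h0'.2, ?_⟩
  have key : ∀ j : Fin (n + 1), Relation.ReflTransGen (PStep p φ) (Gs j) ⊤ := by
    intro j
    induction j using Fin.reverseInduction with
    | last => rw [hlast]
    | cast i ih =>
        refine Relation.ReflTransGen.head ?_ ih
        exact ⟨(hall i.castSucc).1, (hall i.castSucc).2, (hall i.succ).1, (hall i.succ).2,
          hmono (Fin.castSucc_le_succ i), (hstep i).1, (hstep i).2⟩
  have := key 0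
  rwa [h0] at this

lemma pStep_inf (hp : p.Prime) {φ : A ≃* B} {H L M : Subgroup G} (hHn : H.Normal)
    (hHc : Compatible φ H) (h : PStep p φ L M) :
    Relation.ReflTransGen (PStep p φ) (H ⊓ L) (H ⊓ M) := by
  obtain ⟨hLn, hLc, hMn, hMc, hLM, hrel, hcong⟩ := h
  have hle : H ⊓ L ≤ H ⊓ M := inf_le_inf_left H hLM
  have hdvd : (H ⊓ L).relIndex (H ⊓ M) ∣ p := by
    have h1 : H ⊓ L = (H ⊓ M) ⊓ L := by
      rw [inf_assoc, inf_eq_right.mpr hLM]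
    rw [h1, Subgroup.inf_relIndex_left]
    haveI := hLn
    have h2 : L.relIndex (H ⊓ M) = L.relIndex ((H ⊓ M) ⊔ L) :=
      (Subgroup.relIndex_sup_right _ _).symm
    rw [h2, ← hrel]
    exact Dvd.intro _
      (Subgroup.relIndex_mul_relIndex _ _ M le_sup_right (sup_le inf_le_right hLM))
  rcases (Nat.Prime.eq_one_or_self_of_dvd hp _ hdvd) with h1 | h1
  · have : H ⊓ M ≤ H ⊓ L := Subgroup.relIndex_eq_one.mp h1
    rw [le_antisymm hle this]
  · refine Relation.ReflTransGen.single ?_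
    haveI := hHn; haveI := hLn; haveI := hMn
    refine ⟨inferInstance, compatible_inf φ hHc hLc, inferInstance,
      compatible_inf φ hHc hMc, hle, h1, ?_⟩
    intro a ha
    obtain ⟨haH, haM⟩ := Subgroup.mem_inf.mp ha
    exact Subgroup.mem_inf.mpr ⟨mul_mem (compatible_mem φ hHc a haH) (inv_mem haH), hcong a haM⟩

lemma rtg_inf (hp : p.Prime) {φ : A ≃* B} {H X Y : Subgroup G} (hHn : H.Normal)
    (hHc : Compatible φ H) (h : Relation.ReflTransGen (PStep p φ) X Y) :
    Relation.ReflTransGen (PStep p φ) (H ⊓ X) (H ⊓ Y) := by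
  induction h with
  | refl => exact .refl
  | tail _ hs ih => exact ih.trans (pStep_inf hp hHn hHc hs)

lemma pCompatible_inf_aux (hp : p.Prime) {φ : A ≃* B} {H K : Subgroup G}
    (hH : PCompatible p φ H) (hK : PCompatible p φ K) : PCompatible p φ (H ⊓ K) := by
  obtain ⟨hHn, hHc, hHr⟩ := pCompatible_destruct hH
  obtain ⟨-, -, hKr⟩ := pCompatible_destruct hK
  apply pCompatible_of_rtg
  have h1 : Relation.ReflTransGen (PStep p φ) (H ⊓ K) (H ⊓ ⊤) := rtg_inf hp hHn hHc hKr
  rw [inf_top_eq] at h1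
  exact h1.trans hHr

end Aux

/-- **Lemma 2.2 (c).** If `H` and `K` are `(A,B,φ,p)`-compatible subgroups of `G` then so is
`H ∩ K`; consequently, the family `𝓕_G^p(A,B,φ)` of all `(A,B,φ,p)`-compatible subgroups of
`G` is closed under intersections of finite collections of subgroups. -/
theorem pCompatible_inf
    (p : ℕ) (hp : p.Prime) (G : Type*) [Group G] (A B : Subgroup G) (φ : A ≃* B)
    (H K : Subgroup G) (hH : PCompatible p φ H) (hK : PCompatible p φ K) :
    PCompatible p φ (H ⊓ K) ∧
      ∀ (ι : Type) (s : Finset ι) (f : ι → Subgroup G), s.Nonempty →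
        (∀ i ∈ s, PCompatible p φ (f i)) → PCompatible p φ (s.inf f) := by
  refine ⟨pCompatible_inf_aux hp hH hK, ?_⟩
  intro ι s f _
  classical
  refine Finset.induction_on s (fun _ => by simpa using pCompatible_top φ) ?_
  intro a t _ ih hf
  rw [Finset.inf_insert]
  exact pCompatible_inf_aux hp (hf a (Finset.mem_insert_self a t))
    (ih fun i hi => hf i (Finset.mem_insert_of_mem hi))
end

section
/- Let p be a prime, let r ≥ 0 and s ≥ 0 be integers, let ε = ±1 (with p = 2 and s ≤ r in case ε = −1), and consider the group G = ⟨a, b; b⁻¹a^{p^r}b = a^{ε p^r}⟩ with A and B the cyclic subgroups generated by a and b respectively. Then for every integer n > s there exists a normal subgroup N of G of finite p-power index such that A ∩ N = A^{p^n}, B ∩ N = B^{p^{n−s}}, and a^{p^{n−1}} ≡ b^{p^{n−s−1}} (mod N). -/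
/-- The single relator `b⁻¹aˡb·a⁻ᵐ` of the Baumslag–Solitar group `G(l,m)`,
with `a = FreeGroup.of 0` and `b = FreeGroup.of 1`. -/
def bsRels (l m : ℤ) : Set (FreeGroup (Fin 2)) :=
  {(FreeGroup.of 1)⁻¹ * (FreeGroup.of 0) ^ l * FreeGroup.of 1 * ((FreeGroup.of 0) ^ m)⁻¹}

/-- The Baumslag–Solitar group `G(l,m) = ⟨a, b; b⁻¹aˡb = aᵐ⟩`. -/
def BS (l m : ℤ) : Type := PresentedGroup (bsRels l m)

instance (l m : ℤ) : Group (BS l m) := by delta BS; infer_instance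

/-- The generator `a` of `BS l m`. -/
def BS.a (l m : ℤ) : BS l m := PresentedGroup.of (0 : Fin 2)

/-- The generator `b` of `BS l m`. -/
def BS.b (l m : ℤ) : BS l m := PresentedGroup.of (1 : Fin 2)

open Subgroup Multiplicative


lemma bs_lift (l m : ℤ) {H : Type*} [Group H] (α β : H)
    (hrel : α ^ l * β = β * α ^ m) :
    ∃ f : BS l m →* H, f (BS.a l m) = α ∧ f (BS.b l m) = β := by
  have h : ∀ r ∈ bsRels l m, FreeGroup.lift (![α, β]) r = 1 := by
    intro r hr
    simp only [bsRels, Set.mem_singleton_iff] at hr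
    subst hr
    simp only [map_mul, map_inv, map_zpow, FreeGroup.lift_apply_of, Matrix.cons_val_zero,
      Matrix.cons_val_one, Matrix.head_cons]
    rw [mul_assoc β⁻¹, hrel]
    group
  exact ⟨PresentedGroup.toGroup h, PresentedGroup.toGroup.of h, PresentedGroup.toGroup.of h⟩

lemma inter_ker_zpowers {G H : Type*} [Group G] [Group H] (f : G →* H) (g : G) (k : ℕ)
    (hk : 0 < k) (ho : orderOf (f g) = k) :
    zpowers g ⊓ f.ker = zpowers (g ^ k) := by
  ext x
  simp only [Subgroup.mem_inf, Subgroup.mem_zpowers_iff, MonoidHom.mem_ker]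
  constructor
  · rintro ⟨⟨t, rfl⟩, hker⟩
    rw [map_zpow] at hker
    have : ((orderOf (f g) : ℤ)) ∣ t := orderOf_dvd_iff_zpow_eq_one.mpr hker
    rw [ho] at this
    obtain ⟨e, rfl⟩ := this
    exact ⟨e, by rw [← zpow_natCast, ← zpow_mul]⟩
  · rintro ⟨e, rfl⟩
    refine ⟨⟨(k : ℤ) * e, by rw [zpow_mul, zpow_natCast]⟩, ?_⟩
    rw [map_zpow, map_pow, ← ho, pow_orderOf_eq_one, one_zpow]

theorem reduce (p : ℕ) (hp : p.Prime) (l m : ℤ) (n s : ℕ) (hn : s < n)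
    {H : Type*} [Group H] (α β : H)
    (hrel : α ^ l * β = β * α ^ m)
    (hα : orderOf α = p ^ n) (hβ : orderOf β = p ^ (n - s))
    (hcong : α ^ p ^ (n - 1) = β ^ p ^ (n - s - 1))
    (K : ℕ) (hcard : Nat.card H = p ^ K) :
    ∃ N : Subgroup (BS l m), N.Normal ∧ (∃ k : ℕ, N.index = p ^ k) ∧
      Subgroup.zpowers (BS.a l m) ⊓ N = Subgroup.zpowers (BS.a l m ^ p ^ n) ∧
      Subgroup.zpowers (BS.b l m) ⊓ N = Subgroup.zpowers (BS.b l m ^ p ^ (n - s)) ∧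
      BS.a l m ^ p ^ (n - 1) * (BS.b l m ^ p ^ (n - s - 1))⁻¹ ∈ N := by
  obtain ⟨f, hfa, hfb⟩ := bs_lift l m α β hrel
  refine ⟨f.ker, MonoidHom.normal_ker f, ?_, ?_, ?_, ?_⟩
  · have h1 : f.ker.index = Nat.card f.range := Subgroup.index_ker f
    have h2 : Nat.card f.range ∣ Nat.card H := Subgroup.card_subgroup_dvd_card f.range
    rw [hcard] at h2
    obtain ⟨k, -, hk⟩ := (Nat.dvd_prime_pow hp).mp h2
    exact ⟨k, by rw [h1, hk]⟩
  · have := inter_ker_zpowers f (BS.a l m) (p ^ n) (pow_pos hp.pos n) (by rw [hfa, hα])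
    exact this
  · have := inter_ker_zpowers f (BS.b l m) (p ^ (n - s)) (pow_pos hp.pos _) (by rw [hfb, hβ])
    exact this
  · rw [MonoidHom.mem_ker, map_mul, map_inv, map_pow, map_pow, hfa, hfb, hcong,
      mul_inv_cancel]

theorem abelian_case (p : ℕ) (hp : p.Prime) (l m : ℤ) (n s : ℕ) (hn : s < n)
    (hdvd : ((p : ℤ)) ^ n ∣ l - m) :
    ∃ N : Subgroup (BS l m), N.Normal ∧ (∃ k : ℕ, N.index = p ^ k) ∧
      Subgroup.zpowers (BS.a l m) ⊓ N = Subgroup.zpowers (BS.a l m ^ p ^ n) ∧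
      Subgroup.zpowers (BS.b l m) ⊓ N = Subgroup.zpowers (BS.b l m ^ p ^ (n - s)) ∧
      BS.a l m ^ p ^ (n - 1) * (BS.b l m ^ p ^ (n - s - 1))⁻¹ ∈ N := by
  have hq : p ^ n ≠ 0 := (pow_pos hp.pos n).ne'
  haveI : NeZero (p ^ n) := ⟨hq⟩
  set α : Multiplicative (ZMod (p ^ n)) := Multiplicative.ofAdd (1 : ZMod (p ^ n))
  set β : Multiplicative (ZMod (p ^ n)) := Multiplicative.ofAdd ((p ^ s : ℕ) : ZMod (p ^ n))
  have hαm : α ^ l = α ^ m := by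
    have : α ^ (l - m) = 1 := by
      have : ((l - m : ℤ) : ZMod (p ^ n)) = 0 := by
        rw [ZMod.intCast_zmod_eq_zero_iff_dvd]
        exact_mod_cast hdvd
      show Multiplicative.ofAdd ((l - m) • (1 : ZMod (p ^ n))) = 1
      rw [zsmul_eq_mul, mul_one]
      rw [this, ofAdd_zero]
    rw [zpow_sub] at this
    exact (inv_mul_eq_one.mp (by rwa [mul_comm] at this)).symm
  have hrel : α ^ l * β = β * α ^ m := by rw [hαm, mul_comm]
  have hα : orderOf α = p ^ n := by
    show orderOf (Multiplicative.ofAdd (1 : ZMod (p ^ n))) = p ^ n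
    rw [orderOf_ofAdd_eq_addOrderOf, ZMod.addOrderOf_one]
  have hβ : orderOf β = p ^ (n - s) := by
    show orderOf (Multiplicative.ofAdd ((p ^ s : ℕ) : ZMod (p ^ n))) = p ^ (n - s)
    rw [orderOf_ofAdd_eq_addOrderOf, ZMod.addOrderOf_coe _ hq,
      Nat.gcd_eq_right (pow_dvd_pow p hn.le), Nat.pow_div hn.le hp.pos]
  have hcong : α ^ p ^ (n - 1) = β ^ p ^ (n - s - 1) := by
    show Multiplicative.ofAdd ((p ^ (n - 1)) • (1 : ZMod (p ^ n)))
      = Multiplicative.ofAdd ((p ^ (n - s - 1)) • ((p ^ s : ℕ) : ZMod (p ^ n)))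
    congr 1
    have he : (n - s - 1) + s = n - 1 := by omega
    simp only [nsmul_eq_mul, mul_one, ← Nat.cast_pow, ← Nat.cast_mul, ← pow_add, he]
  exact reduce p hp l m n s hn α β hrel hα hβ hcong n
    (by rw [Nat.card_eq_fintype_card]; simp [Fintype.card_multiplicative, ZMod.card])



def addAutToMulAut {A : Type*} [AddGroup A] : Multiplicative (AddAut A) →* MulAut (Multiplicative A) where
  toFun e := AddEquiv.toMultiplicative (toAdd e)
  map_one' := by ext x; rfl
  map_mul' e₁ e₂ := by ext x; rfl

def zphi (q : ℕ) : (ZMod q)ˣ →* MulAut (Multiplicative (ZMod q)) :=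
  addAutToMulAut.comp (DistribMulAction.toAddAut (ZMod q)ˣ (ZMod q))

lemma zphi_apply (q : ℕ) (u : (ZMod q)ˣ) (x : ZMod q) :
    zphi q u (ofAdd x) = ofAdd ((u : ZMod q) * x) := rfl

abbrev SD (q : ℕ) := SemidirectProduct (Multiplicative (ZMod q)) (ZMod q)ˣ (zphi q)

def sdEquiv (q : ℕ) : SD q ≃ Multiplicative (ZMod q) × (ZMod q)ˣ :=
  ⟨fun x => (x.left, x.right), fun x => ⟨x.1, x.2⟩, fun _ => rfl, fun _ => rfl⟩

lemma card_SD (q : ℕ) [NeZero q] : Nat.card (SD q) = q * Nat.totient q := by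
  rw [Nat.card_congr (sdEquiv q), Nat.card_prod]
  congr 1
  · show Nat.card (ZMod q) = q
    exact Nat.card_zmod q
  · rw [Nat.card_eq_fintype_card, ZMod.card_units_eq_totient]

lemma five_pow : ∀ k : ℕ, ∃ j : ℕ, Odd j ∧ 5 ^ (2 ^ k) = 1 + 2 ^ (k + 2) * j := by
  intro k
  induction k with
  | zero => exact ⟨1, odd_one, by norm_num⟩
  | succ k ih =>
    obtain ⟨j, hj, hjeq⟩ := ih
    refine ⟨j + 2 ^ (k + 1) * j ^ 2, hj.add_even (Even.mul_right ⟨2 ^ k, by ring⟩ _), ?_⟩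
    have h1 : (2:ℕ) ^ (k + 1 + 2) = 2 ^ k * 8 := by ring
    have h2 : (2:ℕ) ^ (k + 2) = 2 ^ k * 4 := by ring
    have h3 : (2:ℕ) ^ (k + 1) = 2 ^ k * 2 := by ring
    rw [pow_succ 2 k, pow_mul, hjeq]
    simp only [h1, h2, h3]
    ring

theorem hard (r s n : ℕ) (hs : s ≤ r) (hn : s + 2 ≤ n) (l m : ℤ)
    (hl : l = 2 ^ r) (hm : m = -(2 ^ r)) :
    ∃ (H : Type) (_ : Group H) (α β : H),
      α ^ l * β = β * α ^ m ∧ orderOf α = 2 ^ n ∧ orderOf β = 2 ^ (n - s) ∧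
      α ^ 2 ^ (n - 1) = β ^ 2 ^ (n - s - 1) ∧ ∃ K : ℕ, Nat.card H = 2 ^ K := by
  set q : ℕ := 2 ^ (2 * n) with hq
  haveI : NeZero q := ⟨(pow_pos two_pos _).ne'⟩
  have h5 : Nat.Coprime 5 q := Nat.Coprime.pow_right _ (by norm_num)
  set T : ℕ := 2 ^ (n + s - 1) with hT
  set K : ℕ := 2 ^ (n - s - 1) with hK
  set u : (ZMod q)ˣ := -(ZMod.unitOfCoprime 5 h5) ^ T with hu
  have huval : (u : ZMod q) = -(5 : ZMod q) ^ T := by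
    rw [hu, Units.val_neg, Units.val_pow_eq_pow_val, ZMod.coe_unitOfCoprime]
    norm_num
  obtain ⟨j1, hj1odd, hj1⟩ := five_pow (n + s - 1)
  obtain ⟨j2, hj2odd, hj2⟩ := five_pow (2 * n - 2)
  have he1 : n + s - 1 + 2 = n + s + 1 := by omega
  have he2 : 2 * n - 2 + 2 = 2 * n := by omega
  rw [he1] at hj1
  rw [he2] at hj2
  -- hj1 : 5 ^ T = 1 + 2 ^ (n+s+1) * j1,  hj2 : 5 ^ (2^(2n-2)) = 1 + 2^(2n) * j2
  set α : SD q := SemidirectProduct.inl (ofAdd ((2 ^ n : ℕ) : ZMod q)) with hα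
  set β : SD q := ⟨ofAdd (1 : ZMod q), u⟩ with hβ
  -- basic ZMod facts
  have hq0 : ((q : ℕ) : ZMod q) = 0 := ZMod.natCast_self q
  have h2q : (2 : ZMod q) ^ (2 * n) = 0 := by
    have := hq0
    rwa [hq, Nat.cast_pow, Nat.cast_ofNat] at this
  have h5T : (5 : ZMod q) ^ T = 1 + 2 ^ (n + s + 1) * j1 := by
    have := congrArg (fun x : ℕ => (x : ZMod q)) hj1
    push_cast at this
    simpa using this
  have hcz : ((2 ^ n : ℕ) : ZMod q) = (2 : ZMod q) ^ n := by push_cast; ring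
  have hαz : ∀ t : ℤ, α ^ t
      = SemidirectProduct.inl (ofAdd ((t : ZMod q) * ((2 ^ n : ℕ) : ZMod q))) := by
    intro t
    rw [hα, ← map_zpow]
    congr 1
    rw [← ofAdd_toAdd ((ofAdd ((2 ^ n : ℕ) : ZMod q)) ^ t), toAdd_zpow]
    congr 1
    simp [zsmul_eq_mul]
  have h1u : (1 : ZMod q) + (u : ZMod q) = -(2 ^ (n + s + 1) * (j1 : ZMod q)) := by
    rw [huval, h5T]; ring
  have hzero : (2 : ZMod q) ^ r * (2 : ZMod q) ^ n * ((1 : ZMod q) + (u : ZMod q)) = 0 := by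
    rw [h1u]
    have he : r + n + (n + s + 1) = 2 * n + (r + s + 1) := by omega
    have : (2 : ZMod q) ^ r * (2 : ZMod q) ^ n * (2 ^ (n + s + 1) * (j1 : ZMod q)) = 0 := by
      rw [← mul_assoc, ← pow_add, ← pow_add, he, pow_add, h2q, zero_mul, zero_mul]
    rw [mul_neg, this, neg_zero]
  -- (A) the relation
  have hrel : α ^ l * β = β * α ^ m := by
    rw [hαz l, hαz m]
    refine SemidirectProduct.ext ?_ ?_
    · show ofAdd ((l : ZMod q) * _) * zphi q 1 (ofAdd (1 : ZMod q))
        = ofAdd (1 : ZMod q) * zphi q u (ofAdd ((m : ZMod q) * _))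
      rw [map_one, MulAut.one_apply, zphi_apply, ← ofAdd_add, ← ofAdd_add]
      congr 1
      rw [hl, hm, hcz]
      push_cast
      linear_combination hzero
    · show 1 * u = u * 1
      rw [one_mul, mul_one]
  -- powers of β
  have hβpow : ∀ k : ℕ,
      β ^ k = ⟨ofAdd (∑ i ∈ Finset.range k, ((u : ZMod q)) ^ i), u ^ k⟩ := by
    intro k
    induction k with
    | zero =>
      refine SemidirectProduct.ext ?_ ?_ <;> simp
    | succ k ih =>
      rw [pow_succ, ih, hβ]
      refine SemidirectProduct.ext ?_ ?_
      · show ofAdd _ * zphi q (u ^ k) (ofAdd (1 : ZMod q)) = ofAdd _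
        rw [zphi_apply, mul_one, ← ofAdd_add, Finset.sum_range_succ, Units.val_pow_eq_pow_val]
      · show u ^ k * u = u ^ (k + 1)
        rw [pow_succ]
  -- the integer geometric sum
  set U : ℤ := -(5 : ℤ) ^ T with hU
  set S : ℤ := ∑ i ∈ Finset.range K, U ^ i with hS
  have hUcast : ((U : ℤ) : ZMod q) = (u : ZMod q) := by
    rw [hU, huval]; push_cast; ring
  have hEvenK : Even K := by
    rw [hK]
    exact (Nat.even_pow).mpr ⟨even_iff_two_dvd.mpr ⟨1, rfl⟩, by omega⟩
  have hUK : U ^ K = 5 ^ (2 ^ (2 * n - 2)) := by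
    rw [hU, hEvenK.neg_pow, ← pow_mul, hT, hK, ← pow_add]
    congr 2
    omega
  have hj2z : (5 : ℤ) ^ 2 ^ (2 * n - 2) = 1 + 2 ^ (2 * n) * (j2 : ℤ) := by exact_mod_cast hj2
  have hUK1 : U ^ K - 1 = 2 ^ (2 * n) * (j2 : ℤ) := by rw [hUK, hj2z]; ring
  set w : ℕ := 1 + 2 ^ (n + s) * j1 with hw
  have h5Tz : (5 : ℤ) ^ T = 1 + 2 ^ (n + s + 1) * (j1 : ℤ) := by exact_mod_cast hj1
  have hU1 : U - 1 = -2 * (w : ℤ) := by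
    rw [hU, h5Tz, hw]
    push_cast
    rw [pow_succ]
    ring
  have h2pow : (2 : ℤ) ^ (2 * n) = 2 * 2 ^ (2 * n - 1) := by
    rw [← pow_succ']
    congr 1
    omega
  have hSw : S * (w : ℤ) = -(2 ^ (2 * n - 1) * (j2 : ℤ)) := by
    have hgeom : S * (U - 1) = U ^ K - 1 := geom_sum_mul U K
    apply mul_left_cancel₀ (show (-2 : ℤ) ≠ 0 by norm_num)
    have h1 : S * (-2 * (w : ℤ)) = 2 ^ (2 * n) * (j2 : ℤ) := by rw [← hU1, hgeom, hUK1]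
    linear_combination h1 + (j2 : ℤ) * h2pow
  -- auxiliary ZMod facts
  have hhalf : (2 : ZMod q) * 2 ^ (2 * n - 1) = 0 := by
    rw [← pow_succ']
    have : 2 * n - 1 + 1 = 2 * n := by omega
    rw [this, h2q]
  have hoddmul : ∀ j : ℕ, Odd j → (2 : ZMod q) ^ (2 * n - 1) * (j : ZMod q)
      = 2 ^ (2 * n - 1) := by
    rintro j ⟨e, he⟩
    rw [he]
    push_cast
    linear_combination (e : ZMod q) * hhalf
  have hneg : -((2 : ZMod q) ^ (2 * n - 1)) = (2 : ZMod q) ^ (2 * n - 1) := by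
    linear_combination -hhalf
  have hwodd : Odd w := by
    rw [hw]
    have heven : Even (2 ^ (n + s) * j1) :=
      (Even.mul_right ((Nat.even_pow).mpr ⟨even_two, by omega⟩) _)
    exact heven.one_add
  have hwunit : IsUnit ((w : ℕ) : ZMod q) := by
    rw [ZMod.isUnit_iff_coprime, hq]
    exact Nat.Coprime.pow_right _ (Nat.coprime_two_right.mpr hwodd)
  have hSval : (∑ i ∈ Finset.range K, ((u : ZMod q)) ^ i) = (2 : ZMod q) ^ (2 * n - 1) := by
    have hcast : (∑ i ∈ Finset.range K, ((u : ZMod q)) ^ i) = ((S : ℤ) : ZMod q) := by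
      rw [hS]
      push_cast [hUcast]
      rfl
    apply hwunit.mul_right_cancel
    rw [hcast, hoddmul w hwodd]
    have := congrArg (fun x : ℤ => (x : ZMod q)) hSw
    push_cast at this
    rw [this, hoddmul j2 hj2odd, hneg]
  -- u ^ K = 1
  have huK : u ^ K = 1 := by
    ext
    rw [Units.val_pow_eq_pow_val, huval, hEvenK.neg_pow, ← pow_mul, Units.val_one]
    have hTK : T * K = 2 ^ (2 * n - 2) := by
      rw [hT, hK, ← pow_add]
      congr 1
      omega
    rw [hTK]
    have : ((5 ^ 2 ^ (2 * n - 2) : ℕ) : ZMod q) = ((1 + 2 ^ (2 * n) * j2 : ℕ) : ZMod q) := by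
      rw [hj2]
    push_cast at this
    rw [this, h2q]
    ring
  have hβK : β ^ K = SemidirectProduct.inl (ofAdd ((2 : ZMod q) ^ (2 * n - 1))) := by
    rw [hβpow K, hSval]
    refine SemidirectProduct.ext ?_ ?_
    · rfl
    · show u ^ K = 1
      exact huK
  -- congruence
  have hcong : α ^ 2 ^ (n - 1) = β ^ 2 ^ (n - s - 1) := by
    rw [← hK, hβK, hα, ← map_pow]
    congr 1
    rw [← ofAdd_toAdd ((ofAdd ((2 ^ n : ℕ) : ZMod q)) ^ 2 ^ (n - 1)), toAdd_pow]
    congr 1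
    rw [toAdd_ofAdd, nsmul_eq_mul, hcz]
    push_cast
    rw [← pow_add]
    congr 1
    omega
  -- order of α
  haveI : Fact (Nat.Prime 2) := ⟨Nat.prime_two⟩
  have hordα : orderOf α = 2 ^ n := by
    rw [hα, orderOf_injective _ SemidirectProduct.inl_injective,
      orderOf_ofAdd_eq_addOrderOf, ZMod.addOrderOf_coe _ (NeZero.ne q), hq,
      Nat.gcd_eq_right (pow_dvd_pow 2 (by omega)), Nat.pow_div (by omega) two_pos]
    congr 1
    omega
  -- order of β
  have hordβ : orderOf β = 2 ^ (n - s) := by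
    have hne : β ^ 2 ^ (n - s - 1) ≠ 1 := by
      rw [← hK, hβK]
      intro h
      have h1 : ofAdd ((2 : ZMod q) ^ (2 * n - 1)) = 1 :=
        SemidirectProduct.inl_injective (by rw [h, map_one])
      have h2 : ((2 ^ (2 * n - 1) : ℕ) : ZMod q) = 0 := by
        push_cast
        exact h1
      rw [ZMod.natCast_eq_zero_iff, hq] at h2
      have := (Nat.pow_dvd_pow_iff_le_right one_lt_two).mp h2
      omega
    have hone : β ^ 2 ^ (n - s - 1 + 1) = 1 := by
      rw [pow_succ 2 (n - s - 1), pow_mul, ← hK, hβK, ← map_pow]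
      have : (ofAdd ((2 : ZMod q) ^ (2 * n - 1))) ^ 2 = 1 := by
        rw [← ofAdd_toAdd ((ofAdd ((2 : ZMod q) ^ (2 * n - 1))) ^ 2), toAdd_pow, toAdd_ofAdd,
          nsmul_eq_mul]
        have h0 : ((2 : ℕ) : ZMod q) * (2 : ZMod q) ^ (2 * n - 1) = 0 := by
          push_cast
          exact hhalf
        rw [h0, ofAdd_zero]
      rw [this, map_one]
    have := orderOf_eq_prime_pow hne (by rwa [])
    rw [this]
    congr 1
    omega
  refine ⟨SD q, inferInstance, α, β, hrel, hordα, hordβ, ?_, ?_⟩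
  · rw [hcong]
  · refine ⟨2 * n + (2 * n - 1), ?_⟩
    rw [card_SD q, hq, Nat.totient_prime_pow Nat.prime_two (by omega), pow_add]
    norm_num


/-- **Lemma 3.2.** Let `G = ⟨a, b; b⁻¹a^{pʳ}b = a^{ε·pʳ}⟩` with `ε = ±1` (and `p = 2`,
`s ≤ r` if `ε = -1`). Then for every `n > s` there is a normal subgroup `N` of `G` of finite
`p`-power index with `A ∩ N = A^{pⁿ}`, `B ∩ N = B^{p^{n-s}}`, and
`a^{p^{n-1}} ≡ b^{p^{n-s-1}} (mod N)`, where `A = ⟨a⟩` and `B = ⟨b⟩`. -/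
theorem bs_exists_normal_subgroup_controlled
    (p : ℕ) (hp : p.Prime) (r s : ℕ) (ε : ℤ) (hε : ε = 1 ∨ ε = -1)
    (hp2 : ε = -1 → p = 2 ∧ s ≤ r)
    (l m : ℤ) (hl : l = (p : ℤ) ^ r) (hm : m = ε * (p : ℤ) ^ r)
    (n : ℕ) (hn : s < n) :
    ∃ N : Subgroup (BS l m), N.Normal ∧ (∃ k : ℕ, N.index = p ^ k) ∧
      Subgroup.zpowers (BS.a l m) ⊓ N = Subgroup.zpowers (BS.a l m ^ p ^ n) ∧
      Subgroup.zpowers (BS.b l m) ⊓ N = Subgroup.zpowers (BS.b l m ^ p ^ (n - s)) ∧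
      BS.a l m ^ p ^ (n - 1) * (BS.b l m ^ p ^ (n - s - 1))⁻¹ ∈ N := by
  rcases hε with h1 | h1
  · -- ε = 1
    apply abelian_case p hp l m n s hn
    have : l - m = 0 := by rw [hl, hm, h1]; ring
    rw [this]
    exact dvd_zero _
  · -- ε = -1
    obtain ⟨hp2', hsr⟩ := hp2 h1
    subst hp2'
    by_cases hns : n = s + 1
    · apply abelian_case 2 hp l m n s hn
      have : l - m = (2 : ℤ) ^ (r + 1) := by
        rw [hl, hm, h1, pow_succ]
        push_cast
        ring
      rw [this]
      have h2 : ((2 : ℕ) : ℤ) = (2 : ℤ) := by norm_num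
      rw [h2]
      exact pow_dvd_pow 2 (by omega)
    · obtain ⟨H, _, α, β, hrel, hα, hβ, hcong, K, hcard⟩ :=
        hard r s n hsr (by omega) l m (by rw [hl]; push_cast; ring)
          (by rw [hm, h1]; push_cast; ring)
      exact reduce 2 hp l m n s hn α β hrel hα hβ hcong K hcard
end

section
/- Let p be a prime, let A be an infinite cyclic group with generator a, let l and m be integers with |m| = l > 0, and let φ : Aˡ → Aᵐ be the isomorphism sending aˡ to aᵐ. Then the family 𝓕_A^p(Aˡ, Aᵐ, φ) of all (Aˡ,Aᵐ,φ,p)-compatible subgroups of A is an (Aˡ,Aᵐ)-filtration if and only if l = p^r for some integer r ≥ 0 and, in the case m = −l, additionally p = 2. -/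
open Subgroup

section IC
variable {A : Type*} [Group A] {a : A}

lemma ic_inj (hinf : ¬ IsOfFinOrder a) : Function.Injective fun n : ℤ => a ^ n :=
  injective_zpow_iff_not_isOfFinOrder.mpr hinf

lemma ic_mem (hinf : ¬ IsOfFinOrder a) (j k : ℤ) :
    a ^ j ∈ Subgroup.zpowers (a ^ k) ↔ k ∣ j := by
  rw [Subgroup.mem_zpowers_iff]
  constructor
  · rintro ⟨t, ht⟩
    rw [← zpow_mul] at ht
    exact ⟨t, (ic_inj hinf ht).symm⟩
  · rintro ⟨t, rfl⟩
    exact ⟨t, (zpow_mul a k t).symm⟩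

lemma ic_exists (hgen : Subgroup.zpowers a = ⊤) (hinf : ¬ IsOfFinOrder a) (H : Subgroup A) :
    ∃ k : ℕ, H = Subgroup.zpowers (a ^ (k : ℤ)) := by
  set S : AddSubgroup ℤ :=
    { carrier := {j : ℤ | a ^ j ∈ H}
      zero_mem' := by simpa using H.one_mem
      add_mem' := fun {x y} hx hy => by simpa [zpow_add] using mul_mem hx hy
      neg_mem' := fun {x} hx => by simpa [zpow_neg] using H.inv_mem hx } with hS
  obtain ⟨g, hg⟩ := Int.subgroup_cyclic S
  refine ⟨g.natAbs, le_antisymm ?_ ?_⟩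
  · intro x hx
    obtain ⟨j, rfl⟩ : ∃ j : ℤ, a ^ j = x := by
      have : x ∈ Subgroup.zpowers a := hgen ▸ Subgroup.mem_top x
      exact this
    have hj : j ∈ S := hx
    rw [hg, AddSubgroup.mem_closure_singleton] at hj
    obtain ⟨t, ht⟩ := hj
    rw [ic_mem hinf]
    exact Int.natAbs_dvd.mpr ⟨t, by rw [← ht, smul_eq_mul, mul_comm]⟩
  · rw [Subgroup.zpowers_le]
    have hgS : g ∈ S := by
      rw [hg, AddSubgroup.mem_closure_singleton]; exact ⟨1, one_smul _ _⟩
    rcases Int.natAbs_eq g with h | h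
    · rw [← h]; exact hgS
    · have : (g.natAbs : ℤ) = -g := by omega
      rw [this]; exact (S.neg_mem hgS : -g ∈ S)

lemma ic_index (hgen : Subgroup.zpowers a = ⊤) (hinf : ¬ IsOfFinOrder a) (k : ℤ) :
    (Subgroup.zpowers (a ^ k)).index = k.natAbs := by
  set f : Multiplicative ℤ →* A := zpowersHom A a with hf
  have hcomap : (Subgroup.zpowers (a ^ k)).comap f
      = AddSubgroup.toSubgroup (AddSubgroup.zmultiples k) := by
    ext n
    simp only [Subgroup.mem_comap, hf, zpowersHom_apply]
    rw [ic_mem hinf]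
    show k ∣ Multiplicative.toAdd n ↔ Multiplicative.toAdd n ∈ AddSubgroup.zmultiples k
    rw [AddSubgroup.mem_zmultiples_iff]
    constructor
    · rintro ⟨t, ht⟩; exact ⟨t, by rw [smul_eq_mul, mul_comm, ← ht]⟩
    · rintro ⟨t, ht⟩; exact ⟨t, by rw [← ht, smul_eq_mul, mul_comm]⟩
  have hrange : f.range = ⊤ := by
    rw [eq_top_iff]
    intro x _
    have : x ∈ Subgroup.zpowers a := hgen ▸ Subgroup.mem_top x
    obtain ⟨j, rfl⟩ := this
    exact ⟨Multiplicative.ofAdd j, rfl⟩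
  have h2 := Subgroup.index_comap (Subgroup.zpowers (a ^ k)) f
  rw [hcomap, hrange, Subgroup.relIndex_top_right] at h2
  rw [← h2, AddSubgroup.index_toSubgroup, Int.index_zmultiples]
end IC


open Subgroup

section IC2
variable {A : Type*} [Group A] {a : A}

lemma ic_comm (hgen : Subgroup.zpowers a = ⊤) (x y : A) : x * y = y * x := by
  obtain ⟨i, rfl⟩ : ∃ i : ℤ, a ^ i = x := by
    have : x ∈ Subgroup.zpowers a := hgen ▸ Subgroup.mem_top x
    exact this
  obtain ⟨j, rfl⟩ : ∃ j : ℤ, a ^ j = y := by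
    have : y ∈ Subgroup.zpowers a := hgen ▸ Subgroup.mem_top y
    exact this
  rw [← zpow_add, ← zpow_add, add_comm]

lemma ic_norm (hgen : Subgroup.zpowers a = ⊤) (H : Subgroup A) : H.Normal :=
  ⟨fun n hn g => by rw [ic_comm hgen g n, mul_inv_cancel_right]; exact hn⟩

variable {l m : ℤ} {φ : Subgroup.zpowers (a ^ l) ≃* Subgroup.zpowers (a ^ m)}

lemma ic_elt' (x : Subgroup.zpowers (a ^ l)) : ∃ t : ℤ, (x : A) = a ^ (l * t) := by
  obtain ⟨t, ht⟩ := Subgroup.mem_zpowers_iff.mp x.2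
  exact ⟨t, by rw [← ht, ← zpow_mul]⟩

lemma ic_phi' (hφ : (φ ⟨a ^ l, Subgroup.mem_zpowers _⟩ : A) = a ^ m)
    (t : ℤ) (x : Subgroup.zpowers (a ^ l)) (hx : (x : A) = a ^ (l * t)) :
    (φ x : A) = a ^ (m * t) := by
  have h1 : x = (⟨a ^ l, Subgroup.mem_zpowers _⟩ : Subgroup.zpowers (a ^ l)) ^ t := by
    ext; rw [SubgroupClass.coe_zpow, hx, ← zpow_mul]
  rw [h1, map_zpow, SubgroupClass.coe_zpow, hφ, ← zpow_mul]

lemma ic_compat (hinf : ¬ IsOfFinOrder a) (hml : m = l ∨ m = -l)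
    (hφ : (φ ⟨a ^ l, Subgroup.mem_zpowers _⟩ : A) = a ^ m) (k : ℤ) :
    Compatible φ (Subgroup.zpowers (a ^ k)) := by
  have hdvd : ∀ t : ℤ, k ∣ l * t ↔ k ∣ m * t := by
    rcases hml with rfl | rfl
    · intro t; rfl
    · intro t; rw [neg_mul, dvd_neg]
  ext x
  rw [Subgroup.mem_subgroupOf, Subgroup.mem_map]
  simp only [MulEquiv.toMonoidHom_eq_coe, MonoidHom.coe_coe]
  constructor
  · rintro ⟨y, hy, rfl⟩
    rw [Subgroup.mem_subgroupOf] at hy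
    obtain ⟨t, hyt⟩ := ic_elt' y
    rw [ic_phi' hφ t y hyt, ic_mem hinf]
    rw [hyt, ic_mem hinf] at hy
    exact (hdvd t).mp hy
  · intro hx
    obtain ⟨t, hxt⟩ := ic_elt' (l := m) x
    refine ⟨⟨a ^ (l * t), by rw [zpow_mul]; exact zpow_mem (Subgroup.mem_zpowers _) t⟩,
      ?_, Subtype.ext ?_⟩
    · rw [Subgroup.mem_subgroupOf]
      show a ^ (l * t) ∈ _
      rw [ic_mem hinf]
      refine (hdvd t).mpr ?_
      rw [hxt, ic_mem hinf] at hx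
      exact hx
    · rw [ic_phi' hφ t _ rfl, hxt]

end IC2


section IC3
variable {A : Type*} [Group A] {a : A} {p : ℕ} {l m : ℤ}
  {φ : Subgroup.zpowers (a ^ l) ≃* Subgroup.zpowers (a ^ m)}

lemma ic_chain_val (hp : p.Prime) (hgen : Subgroup.zpowers a = ⊤) (hinf : ¬ IsOfFinOrder a)
    {n : ℕ} {Gs : Fin (n + 1) → Subgroup A}
    (hlast : Gs (Fin.last n) = ⊤) (hmono : Monotone Gs)
    (hrel : ∀ i : Fin n, (Gs i.castSucc).relIndex (Gs i.succ) = p) (i : Fin (n + 1)) :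
    Gs i = Subgroup.zpowers (a ^ ((p ^ (n - i.val) : ℕ) : ℤ)) := by
  have hidx : ∀ j : ℕ, j ≤ n → ∀ i : Fin (n + 1), i.val = n - j → (Gs i).index = p ^ j := by
    intro j
    induction j with
    | zero =>
      intro _ i hi
      have h0 : i = Fin.last n := by ext; simpa using hi
      rw [h0, hlast, Subgroup.index_top, pow_zero]
    | succ j ih =>
      intro hj i hi
      set i' : Fin n := ⟨i.val, by omega⟩ with hi'
      have hcs : i'.castSucc = i := by ext; simp [hi']
      have hsucc : (Gs i'.succ).index = p ^ j := by
        refine ih (by omega) i'.succ ?_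
        simp [Fin.val_succ, hi']
        omega
      have hle : Gs i'.castSucc ≤ Gs i'.succ := hmono (Fin.castSucc_lt_succ (i := i')).le
      have hmul := Subgroup.relIndex_mul_index hle
      rw [hrel i', hsucc, hcs] at hmul
      rw [← hmul, pow_succ, mul_comm]
  obtain ⟨k, hk⟩ := ic_exists hgen hinf (Gs i)
  have h1 : (Gs i).index = k := by
    rw [hk, ic_index hgen hinf]
    simp
  have h2 : (Gs i).index = p ^ (n - i.val) := by
    refine hidx (n - i.val) (by omega) i (by omega)
  rw [hk]
  congr 2
  rw [← h1, h2]

lemma ic_pcomp_char (hp : p.Prime) (hgen : Subgroup.zpowers a = ⊤) (hinf : ¬ IsOfFinOrder a)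
    (hl : 0 < l) (hφ : (φ ⟨a ^ l, Subgroup.mem_zpowers _⟩ : A) = a ^ m)
    {H : Subgroup A} (h : PCompatible p φ H) :
    ∃ n : ℕ, H = Subgroup.zpowers (a ^ ((p ^ n : ℕ) : ℤ)) ∧
      (m = -l → p ≠ 2 → n ≤ (l.natAbs).factorization p) := by
  obtain ⟨n, Gs, h0, hlast, hmono, hnc, hstep⟩ := h
  have hval := ic_chain_val hp hgen hinf hlast hmono (fun i => (hstep i).1)
  have hlabs : l.natAbs ≠ 0 := by omega
  refine ⟨n, by rw [← h0, hval 0]; simp, ?_⟩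
  intro hm hp2
  by_contra hns
  push_neg at hns
  set s := (l.natAbs).factorization p with hs
  set i : Fin n := ⟨n - s - 1, by omega⟩ with hi
  have hv1 : n - (i.succ.val : ℕ) = s := by
    have hh : (i.succ.val : ℕ) = n - s - 1 + 1 := rfl
    omega
  have hv2 : n - (i.castSucc.val : ℕ) = s + 1 := by
    have hh : (i.castSucc.val : ℕ) = n - s - 1 := rfl
    omega
  have h1 : Gs i.succ = Subgroup.zpowers (a ^ ((p ^ s : ℕ) : ℤ)) := by
    rw [hval i.succ, hv1]
  have h2 : Gs i.castSucc = Subgroup.zpowers (a ^ ((p ^ (s + 1) : ℕ) : ℤ)) := by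
    rw [hval i.castSucc, hv2]
  set x : Subgroup.zpowers (a ^ l) :=
    ⟨a ^ (l * 1), by rw [zpow_mul]; exact zpow_mem (Subgroup.mem_zpowers _) 1⟩ with hx
  have hxmem : (x : A) ∈ Gs i.succ := by
    rw [h1]
    show a ^ (l * 1) ∈ _
    rw [ic_mem hinf, mul_one]
    have hdl : (p : ℤ) ^ s ∣ l := by
      have := Nat.ordProj_dvd l.natAbs p
      have h' : ((p ^ s : ℕ) : ℤ) ∣ (l.natAbs : ℤ) := Int.natCast_dvd_natCast.mpr this
      rw [Int.dvd_natAbs] at h'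
      exact_mod_cast h'
    exact_mod_cast hdl
  have hstep2 := (hstep i).2 x hxmem
  have hphix : (φ x : A) = a ^ (m * 1) := ic_phi' hφ 1 x rfl
  have hprod : (φ x : A) * (x : A)⁻¹ = a ^ (-(2 * l)) := by
    rw [hphix]
    show _ * (a ^ (l * 1))⁻¹ = _
    rw [← zpow_neg, ← zpow_add]
    congr 1
    rw [hm]; ring
  rw [hprod, h2, ic_mem hinf] at hstep2
  have hnat : p ^ (s + 1) ∣ 2 * l.natAbs := by
    have hl' : ((l.natAbs : ℤ)) = l := Int.natAbs_of_nonneg hl.le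
    have h2l : ((p ^ (s + 1) : ℕ) : ℤ) ∣ 2 * l := dvd_neg.mp hstep2
    rw [← hl'] at h2l
    exact_mod_cast h2l
  have hcop : (Nat.Coprime (p ^ (s + 1)) 2) :=
    Nat.Coprime.pow_left _ ((Nat.coprime_primes hp Nat.prime_two).mpr hp2)
  have hdvd : p ^ (s + 1) ∣ l.natAbs := by
    rw [mul_comm] at hnat
    exact hcop.dvd_of_dvd_mul_right hnat
  have := (Nat.Prime.pow_dvd_iff_le_factorization hp hlabs).mp hdvd
  omega

lemma ic_constr (hp : p.Prime) (hgen : Subgroup.zpowers a = ⊤) (hinf : ¬ IsOfFinOrder a)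
    (hml : m = l ∨ (m = -l ∧ p = 2))
    (hφ : (φ ⟨a ^ l, Subgroup.mem_zpowers _⟩ : A) = a ^ m) (n : ℕ) :
    PCompatible p φ (Subgroup.zpowers (a ^ ((p ^ n : ℕ) : ℤ))) := by
  have hml' : m = l ∨ m = -l := by tauto
  refine ⟨n, fun i => Subgroup.zpowers (a ^ ((p ^ (n - i.val) : ℕ) : ℤ)), by simp, ?_, ?_, ?_, ?_⟩
  · simp [hgen]
  · intro i j hij
    rw [Subgroup.zpowers_le, ic_mem hinf]
    exact Int.natCast_dvd_natCast.mpr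
      (pow_dvd_pow p (by have := Fin.le_def.mp hij; omega : n - j.val ≤ n - i.val))
  · intro i
    exact ⟨ic_norm hgen _, ic_compat hinf hml' hφ _⟩
  · intro i
    have hilt : i.val < n := i.isLt
    have he : n - i.val = (n - (i.val + 1)) + 1 := by omega
    constructor
    · show (Subgroup.zpowers (a ^ ((p ^ (n - i.castSucc.val) : ℕ) : ℤ))).relIndex
        (Subgroup.zpowers (a ^ ((p ^ (n - i.succ.val) : ℕ) : ℤ))) = p
      simp only [Fin.coe_castSucc, Fin.val_succ]
      have hle : Subgroup.zpowers (a ^ ((p ^ (n - i.val) : ℕ) : ℤ)) ≤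
          Subgroup.zpowers (a ^ ((p ^ (n - (i.val + 1)) : ℕ) : ℤ)) := by
        rw [Subgroup.zpowers_le, ic_mem hinf]
        exact Int.natCast_dvd_natCast.mpr (pow_dvd_pow p (by omega))
      have hmul := Subgroup.relIndex_mul_index hle
      rw [ic_index hgen hinf, ic_index hgen hinf] at hmul
      simp only [Int.natAbs_natCast] at hmul
      have hpos : 0 < p ^ (n - (i.val + 1)) := Nat.pow_pos hp.pos
      refine Nat.eq_of_mul_eq_mul_right hpos ?_
      rw [hmul, he, pow_succ, mul_comm]
    · intro x hx
      obtain ⟨t, hxt⟩ := ic_elt' x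
      show (φ x : A) * (x : A)⁻¹ ∈ Subgroup.zpowers (a ^ ((p ^ (n - i.castSucc.val) : ℕ) : ℤ))
      rw [hxt] at hx
      have hprod : (φ x : A) * (x : A)⁻¹ = a ^ (m * t - l * t) := by
        rw [ic_phi' hφ t x hxt, hxt, ← zpow_neg, ← zpow_add, sub_eq_add_neg]
      rw [hprod]
      simp only [Fin.coe_castSucc]
      rw [ic_mem hinf]
      rcases hml with rfl | ⟨hm, hp2⟩
      · simp
      · have hx' : ((p ^ (n - i.succ.val) : ℕ) : ℤ) ∣ l * t := by
          rw [ic_mem hinf] at hx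
          exact hx
        simp only [Fin.val_succ] at hx'
        subst hp2
        have hmt : m * t - l * t = -(2 * (l * t)) := by rw [hm]; ring
        rw [hmt, dvd_neg, he, pow_succ]
        push_cast
        push_cast at hx'
        rw [mul_comm ((2:ℤ) ^ (n - (i.val+1))) 2]
        exact mul_dvd_mul_left 2 hx'

end IC3

/-- Let `A = ⟨a⟩` be infinite cyclic, `|m| = l > 0`, and `φ : Aˡ ≃* Aᵐ` the isomorphism with
`φ(aˡ) = aᵐ`. Then the family `𝓕_A^p(Aˡ, Aᵐ, φ)` of all `(Aˡ,Aᵐ,φ,p)`-compatible subgroups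
of `A` is an `(Aˡ,Aᵐ)`-filtration iff `l = p^r` for some `r ≥ 0` and moreover `p = 2`
whenever `m = -l`. -/
theorem infinite_cyclic_pCompatible_family_filtration_iff
    (p : ℕ) (hp : p.Prime) (A : Type*) [Group A] (a : A)
    (hgen : Subgroup.zpowers a = ⊤) (hinf : ¬ IsOfFinOrder a)
    (l m : ℤ) (hl : 0 < l) (hml : |m| = l)
    (φ : Subgroup.zpowers (a ^ l) ≃* Subgroup.zpowers (a ^ m))
    (hφ : (φ ⟨a ^ l, Subgroup.mem_zpowers _⟩ : A) = a ^ m) :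
    (sInf {H : Subgroup A | PCompatible p φ H} = ⊥ ∧
     (⨅ N ∈ {H : Subgroup A | PCompatible p φ H}, Subgroup.zpowers (a ^ l) ⊔ N) =
        Subgroup.zpowers (a ^ l) ∧
     (⨅ N ∈ {H : Subgroup A | PCompatible p φ H}, Subgroup.zpowers (a ^ m) ⊔ N) =
        Subgroup.zpowers (a ^ m)) ↔
      ((∃ r : ℕ, l = (p : ℤ) ^ r) ∧ (m = -l → p = 2)) := by
  have hml' : m = l ∨ m = -l := (abs_eq hl.le).mp hml
  set P := {H : Subgroup A | PCompatible p φ H} with hP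
  set s := (l.natAbs).factorization p with hs
  have hlabs : l.natAbs ≠ 0 := by omega
  have hcast : ∀ n : ℕ, ((p ^ n : ℕ) : ℤ) = (p : ℤ) ^ n := fun n => by push_cast; ring
  have hpsl : ((p ^ s : ℕ) : ℤ) ∣ l := by
    have h1 : p ^ s ∣ l.natAbs := Nat.ordProj_dvd l.natAbs p
    have h2 : ((p ^ s : ℕ) : ℤ) ∣ (l.natAbs : ℤ) := Int.natCast_dvd_natCast.mpr h1
    rwa [Int.natAbs_of_nonneg hl.le] at h2
  constructor
  · rintro ⟨hc0, hc1, _⟩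
    -- Step 1: a ^ (p ^ s) lies in every A^l ⊔ N for N ∈ P
    have hkey : ∀ N ∈ P, a ^ ((p ^ s : ℕ) : ℤ) ∈ Subgroup.zpowers (a ^ l) ⊔ N := by
      intro N hN
      obtain ⟨n, hNeq, _⟩ := ic_pcomp_char hp hgen hinf hl hφ hN
      set q : ℤ := ((p ^ n : ℕ) : ℤ) with hq
      have hgcd : ((Int.gcd l q : ℕ) : ℤ) ∣ ((p ^ s : ℕ) : ℤ) := by
        have hd2 : ((Int.gcd l q : ℕ) : ℤ) ∣ q := Int.gcd_dvd_right _ _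
        have hd2' : Int.gcd l q ∣ p ^ n := by
          have := hd2
          rw [hq] at this
          exact_mod_cast this
        obtain ⟨j, hjn, hdj⟩ := (Nat.dvd_prime_pow hp).mp hd2'
        have hd1 : ((Int.gcd l q : ℕ) : ℤ) ∣ l := Int.gcd_dvd_left _ _
        have hd1' : Int.gcd l q ∣ l.natAbs := Nat.gcd_dvd_left _ _
        have hjs : j ≤ s := by
          rw [hs]
          refine (Nat.Prime.pow_dvd_iff_le_factorization hp hlabs).mp ?_
          rw [← hdj]
          exact hd1'
        exact Int.natCast_dvd_natCast.mpr (hdj ▸ pow_dvd_pow p hjs)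
      obtain ⟨c, hc⟩ := hgcd
      have hbez := Int.gcd_eq_gcd_ab l q
      have hcomb : ((p ^ s : ℕ) : ℤ) = l * (Int.gcdA l q * c) + q * (Int.gcdB l q * c) := by
        rw [hc, hbez]; ring
      rw [hcomb, zpow_add]
      refine mul_mem (Subgroup.mem_sup_left ?_) (Subgroup.mem_sup_right ?_)
      · rw [zpow_mul]; exact zpow_mem (Subgroup.mem_zpowers _) _
      · rw [hNeq, zpow_mul]; exact zpow_mem (Subgroup.mem_zpowers _) _
    have hmem : a ^ ((p ^ s : ℕ) : ℤ) ∈ Subgroup.zpowers (a ^ l) := by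
      rw [← hc1]
      simp only [Subgroup.mem_iInf]
      exact hkey
    have hls : l = (p : ℤ) ^ s := by
      rw [ic_mem hinf] at hmem
      have := Int.dvd_antisymm hl.le (by positivity) hmem hpsl
      rw [this]
      exact hcast s
    refine ⟨⟨s, hls⟩, ?_⟩
    intro hm
    by_contra hp2
    have hsInf : a ^ ((p ^ s : ℕ) : ℤ) ∈ sInf P := by
      rw [Subgroup.mem_sInf]
      intro N hN
      obtain ⟨n, hNeq, hcond⟩ := ic_pcomp_char hp hgen hinf hl hφ hN
      have hns := hcond hm hp2
      rw [hNeq, ic_mem hinf]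
      exact Int.natCast_dvd_natCast.mpr (pow_dvd_pow p hns)
    rw [hc0, Subgroup.mem_bot] at hsInf
    have : ((p ^ s : ℕ) : ℤ) = 0 := by
      refine ic_inj hinf ?_
      show a ^ ((p ^ s : ℕ) : ℤ) = a ^ (0 : ℤ)
      rw [hsInf, zpow_zero]
    have hpos : 0 < p ^ s := Nat.pow_pos hp.pos
    omega
  · rintro ⟨⟨r, hr⟩, hm2⟩
    have hcase : m = l ∨ (m = -l ∧ p = 2) := by
      rcases hml' with h | h
      · exact Or.inl h
      · exact Or.inr ⟨h, hm2 h⟩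
    have hmemP : ∀ n : ℕ, Subgroup.zpowers (a ^ ((p ^ n : ℕ) : ℤ)) ∈ P :=
      fun n => ic_constr hp hgen hinf hcase hφ n
    have hlP : Subgroup.zpowers (a ^ l) ∈ P := by
      rw [hr, ← hcast r]
      exact hmemP r
    have hml2 : Subgroup.zpowers (a ^ m) = Subgroup.zpowers (a ^ l) := by
      rcases hml' with h | h
      · rw [h]
      · rw [h, zpow_neg, Subgroup.zpowers_inv]
    have hc2 : (⨅ N ∈ P, Subgroup.zpowers (a ^ l) ⊔ N) = Subgroup.zpowers (a ^ l) := by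
      apply le_antisymm
      · exact (iInf₂_le (Subgroup.zpowers (a ^ l)) hlP).trans (by rw [sup_idem])
      · exact le_iInf₂ fun N _ => le_sup_left
    refine ⟨?_, hc2, by rw [hml2]; exact hc2⟩
    rw [eq_bot_iff]
    intro x hx
    rw [Subgroup.mem_sInf] at hx
    obtain ⟨j, rfl⟩ : ∃ j : ℤ, a ^ j = x := by
      have : x ∈ Subgroup.zpowers a := hgen ▸ Subgroup.mem_top x
      exact this
    have hdvd : ∀ n : ℕ, ((p ^ n : ℕ) : ℤ) ∣ j :=
      fun n => (ic_mem hinf _ _).mp (hx _ (hmemP n))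
    have hj0 : j = 0 := by
      by_contra hj
      have h1 := hdvd j.natAbs
      have h2 : ((p ^ j.natAbs : ℕ) : ℤ) ≤ |j| :=
        Int.le_of_dvd (abs_pos.mpr hj) ((dvd_abs _ _).mpr h1)
      have h3 : p ^ j.natAbs ≤ j.natAbs := by
        rw [Int.abs_eq_natAbs] at h2
        exact_mod_cast h2
      have h4 : j.natAbs < p ^ j.natAbs := Nat.lt_pow_self hp.one_lt
      omega
    rw [hj0, zpow_zero]
    exact Subgroup.one_mem _
end

section
/- Let p be a prime, let G be a finite p-group, let A and B be subgroups of G with a fixed isomorphism φ : A → B, and suppose the HNN-extension G* = (G, t; t⁻¹At = B, φ) admits a homomorphism onto a finite p-group whose kernel intersects G trivially; equivalently, G embeds in a finite p-group X containing an element x with x⁻¹ax = φ(a) for all a ∈ A. Then for any chief series 1 = X₀ ≤ X₁ ≤ ⋯ ≤ Xₙ = X of X, the distinct members of the sequence Gᵢ = G ∩ Xᵢ (i = 0, …, n) form a chief series of G satisfying φ(A ∩ Gᵢ) = B ∩ Gᵢ for all i, and for every i and every a ∈ A ∩ Gᵢ₊₁ the elements φ(a) and a are congruent modulo Gᵢ.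 -/
/-- A normal subgroup of prime card `p` in a finite `p`-group is central. -/
lemma aux_conj_eq_self_of_card_prime {p : ℕ} (hp : p.Prime) {Q : Type*} [Group Q] [Finite Q]
    (hQ : IsPGroup p Q) (N : Subgroup Q) [N.Normal] (hN : Nat.card N = p) :
    ∀ (g : Q) (n : Q), n ∈ N → g * n * g⁻¹ = n := by
  intro g n hn
  haveI : Fact p.Prime := ⟨hp⟩
  haveI : IsCyclic N := isCyclic_of_prime_card hN
  have hcard : Nat.card (MulAut N) = p - 1 := by
    rw [IsCyclic.card_mulAut, hN, Nat.totient_prime hp]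
  have h1 : (MulAut.conjNormal g : MulAut N) = 1 := by
    obtain ⟨k, hk⟩ := hQ g
    have hd1 : orderOf (MulAut.conjNormal (G := Q) g : MulAut N) ∣ p ^ k := by
      apply orderOf_dvd_of_pow_eq_one
      rw [← map_pow, hk, map_one]
    have hd2 : orderOf (MulAut.conjNormal (G := Q) g : MulAut N) ∣ p - 1 :=
      hcard ▸ orderOf_dvd_natCard _
    have hcop : Nat.Coprime p (p - 1) := by
      have h1' : Nat.Coprime (p - (p - 1)) (p - 1) := by
        rw [Nat.sub_sub_self hp.one_lt.le]
        exact Nat.coprime_one_left _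
      exact (Nat.coprime_sub_self_left (Nat.sub_le p 1)).mp h1'
    have : orderOf (MulAut.conjNormal (G := Q) g : MulAut N) = 1 :=
      Nat.dvd_one.mp ((Nat.Coprime.pow_left k hcop).gcd_eq_one ▸ Nat.dvd_gcd hd1 hd2)
    exact orderOf_eq_one_iff.mp this
  have := congrArg (fun e : MulAut N => ((e ⟨n, hn⟩ : N) : Q)) h1
  simpa [MulAut.conjNormal_apply] using this
/-- Suppose the finite `p`-group `G` (with subgroups `A`, `B` and isomorphism `φ : A ≃* B`)
embeds via `ι` into a finite `p`-group `X` containing an element `x` with `x⁻¹ι(a)x = ι(φ(a))`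
for all `a ∈ A`. Then for any chief series `1 = X₀ ≤ X₁ ≤ ⋯ ≤ Xₙ = X` of `X`, the
subgroups `Gᵢ = G ∩ Xᵢ` form (after deleting repetitions) a chief series of `G`: they are
normal, increase from `1` to `G` with successive factors of order `1` or `p`, they satisfy
`φ(A ∩ Gᵢ) = B ∩ Gᵢ` for all `i`, and `φ(a) ≡ a (mod Gᵢ)` for all `a ∈ A ∩ Gᵢ₊₁`. -/
theorem chief_series_pullback_of_embedding
    (p : ℕ) (hp : p.Prime) (G : Type*) [Group G] [Finite G] (hG : IsPGroup p G)
    (A B : Subgroup G) (φ : A ≃* B)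
    (X : Type*) [Group X] [Finite X] (hX : IsPGroup p X)
    (ι : G →* X) (hι : Function.Injective ι)
    (x : X) (hx : ∀ a : A, x⁻¹ * ι (a : G) * x = ι ((φ a : G)))
    (n : ℕ) (Xs : Fin (n + 1) → Subgroup X)
    (hX0 : Xs 0 = ⊥) (hXn : Xs (Fin.last n) = ⊤) (hmono : Monotone Xs)
    (hnorm : ∀ i, (Xs i).Normal)
    (hchief : ∀ i : Fin n, (Xs i.castSucc).relIndex (Xs i.succ) = p) :
    ((Xs 0).comap ι = ⊥) ∧ ((Xs (Fin.last n)).comap ι = ⊤) ∧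
    Monotone (fun i => (Xs i).comap ι) ∧
    (∀ i, ((Xs i).comap ι).Normal) ∧
    (∀ i : Fin n, ((Xs i.castSucc).comap ι).relIndex ((Xs i.succ).comap ι) = 1 ∨
      ((Xs i.castSucc).comap ι).relIndex ((Xs i.succ).comap ι) = p) ∧
    (∀ i, Compatible φ ((Xs i).comap ι)) ∧
    (∀ i : Fin n, ∀ a : A, (a : G) ∈ (Xs i.succ).comap ι →
      (φ a : G) * (a : G)⁻¹ ∈ (Xs i.castSucc).comap ι) := by
  haveI : Fact p.Prime := ⟨hp⟩
  refine ⟨?_, ?_, ?_, ?_, ?_, ?_, ?_⟩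
  · -- comap of ⊥ is ⊥
    rw [hX0, MonoidHom.comap_bot, MonoidHom.ker_eq_bot_iff]
    exact hι
  · rw [hXn]
    exact Subgroup.comap_top ι
  · exact fun i j h => Subgroup.comap_mono (hmono h)
  · exact fun i => Subgroup.Normal.comap (hnorm i) ι
  · -- relIndex 1 or p
    intro i
    haveI := hnorm i.castSucc
    rw [Subgroup.relIndex_comap]
    set M := Subgroup.map ι ((Xs i.succ).comap ι) with hMdef
    have hM : M ≤ Xs i.succ := Subgroup.map_comap_le ι _
    have hle1 : Xs i.castSucc ≤ M ⊔ Xs i.castSucc := le_sup_right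
    have hle2 : M ⊔ Xs i.castSucc ≤ Xs i.succ :=
      sup_le hM (hmono (Fin.castSucc_lt_succ (i := i)).le)
    have key : (Xs i.castSucc).relIndex M
        * (M ⊔ Xs i.castSucc).relIndex (Xs i.succ) = p := by
      rw [← Subgroup.relIndex_sup_right M (Xs i.castSucc),
        Subgroup.relIndex_mul_relIndex _ _ _ hle1 hle2, hchief i]
    exact hp.eq_one_or_self_of_dvd _ ⟨_, key.symm⟩
  · -- compatibility
    intro i
    ext b
    simp only [Subgroup.mem_map, Subgroup.mem_subgroupOf, Subgroup.mem_comap]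
    constructor
    · rintro ⟨a, ha, rfl⟩
      show ι ((φ a : G)) ∈ Xs i
      rw [← hx a]
      simpa using (hnorm i).conj_mem _ ha x⁻¹
    · intro hb
      refine ⟨φ.symm b, ?_, by simp⟩
      have h := hx (φ.symm b)
      rw [φ.apply_symm_apply] at h
      have h2 : ι ((φ.symm b : G)) = x * ι (b : G) * x⁻¹ := by
        rw [← h]; group
      show ι ((φ.symm b : G)) ∈ Xs i
      rw [h2]
      exact (hnorm i).conj_mem _ hb x
  · -- congruence mod Gᵢ
    intro i a ha
    haveI := hnorm i.castSucc
    haveI := hnorm i.succ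
    simp only [Subgroup.mem_comap] at ha ⊢
    rw [map_mul, map_inv, ← hx a]
    set H := Xs i.castSucc with hH
    set K := Xs i.succ with hK
    set π := QuotientGroup.mk' H with hπ
    haveI : (K.map π).Normal :=
      Subgroup.Normal.map (hnorm i.succ) π (QuotientGroup.mk'_surjective H)
    have hQ : IsPGroup p (X ⧸ H) := hX.to_quotient H
    have hker : (π.comp K.subtype).ker = H.subgroupOf K := by
      ext g
      simp [MonoidHom.mem_ker, Subgroup.mem_subgroupOf, π, QuotientGroup.eq_one_iff]
    have hN : Nat.card (K.map π) = p := by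
      have e := QuotientGroup.quotientKerEquivRange (π.comp K.subtype)
      rw [MonoidHom.range_comp, Subgroup.range_subtype] at e
      have hc : ((π.comp K.subtype).ker).index = p := by
        rw [hker]; exact hchief i
      calc Nat.card (K.map π)
          = Nat.card (↥K ⧸ (π.comp K.subtype).ker) := (Nat.card_congr e.toEquiv).symm
        _ = ((π.comp K.subtype).ker).index := rfl
        _ = p := hc
    have hcen := aux_conj_eq_self_of_card_prime hp hQ (K.map π) hN
    have hmem : π (ι (a : G)) ∈ K.map π := Subgroup.mem_map_of_mem π ha
    have hcomm := hcen (π x)⁻¹ (π (ι (a : G))) hmem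
    rw [inv_inv] at hcomm
    apply (QuotientGroup.eq_one_iff _).mp
    show π (x⁻¹ * ι (a : G) * x * (ι (a : G))⁻¹) = 1
    simp only [map_mul, map_inv]
    rw [hcomm]
    exact mul_inv_cancel _
end
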